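/- Let n ≥ 2 and c, γ ∈ ℝⁿ with |c| = 1, ⟨c,γ⟩ = 0, and |γ|² = 1/2. Define ρ : ℝ → ℝ^{n+1} by ρ(θ) = (cos²θ, c¹sin²θ + γ¹sin(2θ), …, cⁿsin²θ + γⁿsin(2θ)). Set f₁ = (1/2, −c/2), f₂ = (0, γ), f₃ = (1/2, c/2) ∈ ℝ^{n+1}. Then: (i) f₁, f₂, f₃ are pairwise orthogonal and |f₁|² = |f₂|² = |f₃|² = 1/2; (ii) ρ(θ) = f₃ + cos(2θ)·f₁ + sin(2θ)·f₂ for all θ; and (iii) |ρ'(θ)| = √2 for all θ. In particular, the image of ρ is a circle of radius 1/√2 lying on the unit sphere Sⁿ ⊂ ℝ^{n+1}. -/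

import Mathlib

/-!
STATEMENT 12: For n ≥ 2 and c, γ ∈ ℝⁿ with |c| = 1, ⟨c,γ⟩ = 0, |γ|² = 1/2,
the curve ρ(θ) = (cos²θ, c¹sin²θ + γ¹sin 2θ, …, cⁿsin²θ + γⁿsin 2θ) in ℝ^{n+1}
satisfies, with f₁ = (1/2, −c/2), f₂ = (0, γ), f₃ = (1/2, c/2):
(i) f₁, f₂, f₃ pairwise orthogonal with |f₁|² = |f₂|² = |f₃|² = 1/2;
(ii) ρ(θ) = f₃ + cos(2θ)·f₁ + sin(2θ)·f₂; (iii) |ρ'(θ)| = √2 for all θ.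
-/

theorem stmt12 (n : ℕ) (hn : 2 ≤ n) (c γ : Fin n → ℝ)
    (hc : ∑ j, (c j) ^ 2 = 1)
    (hcγ : ∑ j, c j * γ j = 0)
    (hγ : ∑ j, (γ j) ^ 2 = 1 / 2)
    (ρ : ℝ → Fin (n + 1) → ℝ)
    (hρ : ∀ θ, ρ θ = Fin.cons (Real.cos θ ^ 2)
      (fun i => c i * Real.sin θ ^ 2 + γ i * Real.sin (2 * θ)))
    (f₁ f₂ f₃ : Fin (n + 1) → ℝ)
    (hf₁ : f₁ = Fin.cons (1 / 2) (fun i => -(c i) / 2))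
    (hf₂ : f₂ = Fin.cons 0 γ)
    (hf₃ : f₃ = Fin.cons (1 / 2) (fun i => c i / 2)) :
    (∑ i, f₁ i * f₂ i = 0 ∧ ∑ i, f₁ i * f₃ i = 0 ∧ ∑ i, f₂ i * f₃ i = 0 ∧
      ∑ i, (f₁ i) ^ 2 = 1 / 2 ∧ ∑ i, (f₂ i) ^ 2 = 1 / 2 ∧ ∑ i, (f₃ i) ^ 2 = 1 / 2) ∧
    (∀ θ : ℝ, ∀ i, ρ θ i = f₃ i + Real.cos (2 * θ) * f₁ i + Real.sin (2 * θ) * f₂ i) ∧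
    (∀ θ : ℝ, Real.sqrt (∑ i, (deriv (fun θ' => ρ θ' i) θ) ^ 2) = Real.sqrt 2) := by
  have sum_smul : ∀ (a : ℝ) (g : Fin n → ℝ), ∑ j, a * g j = a * ∑ j, g j := by
    intro a g; rw [Finset.mul_sum]
  -- part (i)
  have h12 : ∑ i, f₁ i * f₂ i = 0 := by
    subst hf₁ hf₂
    rw [Fin.sum_univ_succ]
    simp only [Fin.cons_zero, Fin.cons_succ, Fin.cons_succ]
    have : ∑ j, -(c j) / 2 * γ j = (-(1:ℝ)/2) * ∑ j, c j * γ j := by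
      rw [Finset.mul_sum]; exact Finset.sum_congr rfl fun j _ => by ring
    rw [this, hcγ]; ring
  have h13 : ∑ i, f₁ i * f₃ i = 0 := by
    subst hf₁ hf₃
    rw [Fin.sum_univ_succ]
    simp only [Fin.cons_zero, Fin.cons_succ]
    have : ∑ j, -(c j) / 2 * (c j / 2) = (-(1:ℝ)/4) * ∑ j, (c j) ^ 2 := by
      rw [Finset.mul_sum]; exact Finset.sum_congr rfl fun j _ => by ring
    rw [this, hc]; ring
  have h23 : ∑ i, f₂ i * f₃ i = 0 := by
    subst hf₂ hf₃
    rw [Fin.sum_univ_succ]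
    simp only [Fin.cons_zero, Fin.cons_succ]
    have : ∑ j, γ j * (c j / 2) = ((1:ℝ)/2) * ∑ j, c j * γ j := by
      rw [Finset.mul_sum]; exact Finset.sum_congr rfl fun j _ => by ring
    rw [this, hcγ]; ring
  have h1 : ∑ i, (f₁ i) ^ 2 = 1 / 2 := by
    subst hf₁
    rw [Fin.sum_univ_succ]
    simp only [Fin.cons_zero, Fin.cons_succ]
    have : ∑ j, (-(c j) / 2) ^ 2 = ((1:ℝ)/4) * ∑ j, (c j) ^ 2 := by
      rw [Finset.mul_sum]; exact Finset.sum_congr rfl fun j _ => by ring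
    rw [this, hc]; ring
  have h2 : ∑ i, (f₂ i) ^ 2 = 1 / 2 := by
    subst hf₂
    rw [Fin.sum_univ_succ]
    simp only [Fin.cons_zero, Fin.cons_succ]
    rw [hγ]; ring
  have h3 : ∑ i, (f₃ i) ^ 2 = 1 / 2 := by
    subst hf₃
    rw [Fin.sum_univ_succ]
    simp only [Fin.cons_zero, Fin.cons_succ]
    have : ∑ j, (c j / 2) ^ 2 = ((1:ℝ)/4) * ∑ j, (c j) ^ 2 := by
      rw [Finset.mul_sum]; exact Finset.sum_congr rfl fun j _ => by ring
    rw [this, hc]; ring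
  -- part (ii)
  have hpt : ∀ θ : ℝ, ∀ i, ρ θ i = f₃ i + Real.cos (2 * θ) * f₁ i + Real.sin (2 * θ) * f₂ i := by
    intro θ i
    rw [hρ, hf₁, hf₂, hf₃]
    refine Fin.cases ?_ ?_ i
    · simp only [Fin.cons_zero]
      rw [Real.cos_sq]; ring
    · intro j
      simp only [Fin.cons_succ]
      rw [Real.sin_sq_eq_half_sub]; ring
  refine ⟨⟨h12, h13, h23, h1, h2, h3⟩, hpt, ?_⟩
  -- part (iii)
  intro θ
  have hderiv : ∀ i, deriv (fun θ' => ρ θ' i) θ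
      = -Real.sin (2 * θ) * 2 * f₁ i + Real.cos (2 * θ) * 2 * f₂ i := by
    intro i
    have hfun : (fun θ' => ρ θ' i)
        = fun θ' => f₃ i + Real.cos (2 * θ') * f₁ i + Real.sin (2 * θ') * f₂ i :=
      funext fun θ' => hpt θ' i
    rw [hfun]
    have hid : HasDerivAt (fun x : ℝ => 2 * x) 2 θ := by
      simpa using (hasDerivAt_id θ).const_mul (2:ℝ)
    have hcos : HasDerivAt (fun θ' : ℝ => Real.cos (2 * θ')) (-Real.sin (2 * θ) * 2) θ :=
      (Real.hasDerivAt_cos (2 * θ)).comp θ hid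
    have hsin : HasDerivAt (fun θ' : ℝ => Real.sin (2 * θ')) (Real.cos (2 * θ) * 2) θ :=
      (Real.hasDerivAt_sin (2 * θ)).comp θ hid
    have := (((hasDerivAt_const θ (f₃ i)).add (hcos.mul_const (f₁ i))).add
      (hsin.mul_const (f₂ i))).deriv
    exact this.trans (by ring)
  have hsum : ∑ i, (deriv (fun θ' => ρ θ' i) θ) ^ 2 = 2 := by
    have e1 : ∑ i, (deriv (fun θ' => ρ θ' i) θ) ^ 2
        = ∑ i, ((4 * Real.sin (2 * θ) ^ 2) * (f₁ i) ^ 2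
          + (4 * Real.cos (2 * θ) ^ 2) * (f₂ i) ^ 2
          + (-8 * Real.sin (2 * θ) * Real.cos (2 * θ)) * (f₁ i * f₂ i)) :=
      Finset.sum_congr rfl fun i _ => by rw [hderiv i]; ring
    rw [e1]
    simp only [Finset.sum_add_distrib, ← Finset.mul_sum]
    rw [h1, h2, h12]
    have := Real.sin_sq_add_cos_sq (2 * θ)
    nlinarith [this]
  rw [hsum]
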